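/- Let Ω ⊆ ℝⁿ be open, x₀ ∈ Ω, and suppose u(x) = g(x) + K‖x‖² on a ball B(x₀, δ) ⊆ Ω, where g is concave on B(x₀, δ) and K ∈ ℝ. Set f := −g. Then D*u(x₀) = −D*f(x₀) + 2Kx₀ and D⁺u(x₀) = −∂f(x₀) + 2Kx₀, where ∂f(x₀) is the subdifferential of the convex function f at x₀. -/

import Mathlib

open Set Filter Topology
open scoped RealInnerProductSpace

noncomputable section

/-- The set of reachable gradients `D*u(x)` of `u` at `x` relative to the set `Ω`. -/
def reachableGradients {n : ℕ} (Ω : Set (EuclideanSpace ℝ (Fin n)))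
    (u : EuclideanSpace ℝ (Fin n) → ℝ) (x : EuclideanSpace ℝ (Fin n)) :
    Set (EuclideanSpace ℝ (Fin n)) :=
  {p | ∃ xs : ℕ → EuclideanSpace ℝ (Fin n), (∀ i, xs i ∈ Ω) ∧
    (∀ i, DifferentiableAt ℝ u (xs i)) ∧
    Tendsto xs atTop (𝓝 x) ∧ Tendsto (fun i => gradient u (xs i)) atTop (𝓝 p)}

/-- The subdifferential of `f` at `x` relative to the set `B`. -/
def subdiff {n : ℕ} (B : Set (EuclideanSpace ℝ (Fin n)))
    (f : EuclideanSpace ℝ (Fin n) → ℝ) (x : EuclideanSpace ℝ (Fin n)) :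
    Set (EuclideanSpace ℝ (Fin n)) :=
  {v | ∀ y ∈ B, f x + ⟪v, y - x⟫ ≤ f y}



private lemma sum_pad {M : Type*} [AddCommMonoid M] {c d : ℕ} (h : c ≤ d) (F : Fin c → M) :
    ∑ j : Fin d, (if hj : (j : ℕ) < c then F ⟨j, hj⟩ else 0) = ∑ k : Fin c, F k := by
  classical
  have h1 : ∑ j ∈ (Finset.univ.map ⟨Fin.castLE h, Fin.castLE_injective h⟩ : Finset (Fin d)),
      (if hj : (j : ℕ) < c then F ⟨j, hj⟩ else 0) = ∑ k : Fin c, F k := by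
    rw [Finset.sum_map]
    refine Finset.sum_congr rfl fun k _ => ?_
    have hk : ((⟨Fin.castLE h, Fin.castLE_injective h⟩ : Fin c ↪ Fin d) k : ℕ) < c := k.isLt
    rw [dif_pos hk]
    congr 1
  rw [← h1]
  refine (Finset.sum_subset (Finset.subset_univ _) fun j _ hj => ?_).symm
  rw [dif_neg]
  intro hjc
  exact hj (Finset.mem_map.2 ⟨⟨(j : ℕ), hjc⟩, Finset.mem_univ _, by ext; rfl⟩)

private lemma isCompact_convexHull' {E : Type*} [NormedAddCommGroup E] [NormedSpace ℝ E]
    [FiniteDimensional ℝ E] {s : Set E} (hs : IsCompact s) : IsCompact (convexHull ℝ s) := by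
  classical
  rcases s.eq_empty_or_nonempty with rfl | ⟨s₀, hs₀⟩
  · simp
  set d := Module.finrank ℝ E with hd
  have hmap : Continuous (fun p : (Fin (d + 1) → ℝ) × (Fin (d + 1) → E) =>
      ∑ i, p.1 i • p.2 i) := by
    refine continuous_finset_sum _ fun i _ => ?_
    exact ((continuous_apply i).comp continuous_fst).smul ((continuous_apply i).comp continuous_snd)
  have hcomp : IsCompact ((stdSimplex ℝ (Fin (d + 1))) ×ˢ (Set.univ.pi fun _ : Fin (d + 1) => s)) :=
    (isCompact_stdSimplex ℝ (Fin (d + 1))).prod (isCompact_univ_pi fun _ => hs)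
  have himage := hcomp.image hmap
  have himeq : (fun p : (Fin (d + 1) → ℝ) × (Fin (d + 1) → E) => ∑ i, p.1 i • p.2 i) ''
      ((stdSimplex ℝ (Fin (d + 1))) ×ˢ (Set.univ.pi fun _ : Fin (d + 1) => s))
      = convexHull ℝ s := by
    apply Subset.antisymm
    · rintro p ⟨⟨w, x⟩, ⟨hw, hx⟩, rfl⟩
      have hw' : ∀ i, 0 ≤ w i := hw.1
      have hw1 : ∑ i, w i = 1 := hw.2
      have := Finset.centerMass_mem_convexHull (Finset.univ) (fun i _ => hw' i)
        (by rw [hw1]; norm_num) (fun i _ => hx i (mem_univ i))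
      rwa [Finset.centerMass_eq_of_sum_1 _ _ hw1] at this
    · intro p hp
      rw [convexHull_eq_union] at hp
      simp only [mem_iUnion] at hp
      obtain ⟨t, hts, hai, hpt⟩ := hp
      have hcard : t.card ≤ d + 1 := by
        have h1 := hai.card_le_finrank_succ
        have h2 : Module.finrank ℝ ↥(vectorSpan ℝ (Set.range (Subtype.val : t → E))) ≤ d :=
          Submodule.finrank_le _
        have h3 : Fintype.card {x // x ∈ t} = t.card := Fintype.card_coe t
        omega
      rw [Finset.convexHull_eq] at hpt
      obtain ⟨w, hw0, hw1, hwp⟩ := hpt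
      rw [Finset.centerMass_eq_of_sum_1 _ _ hw1] at hwp
      set σ : Fin t.card ≃ {x // x ∈ t} := t.equivFin.symm with hσ
      set w' : Fin (d + 1) → ℝ :=
        fun j => if hj : (j : ℕ) < t.card then w (σ ⟨j, hj⟩) else 0 with hw'
      set x' : Fin (d + 1) → E :=
        fun j => if hj : (j : ℕ) < t.card then (σ ⟨j, hj⟩ : E) else s₀ with hx'
      have hsum1 : ∑ j, w' j = 1 := by
        rw [hw']
        rw [sum_pad hcard (fun k => w (σ k))]
        rw [← hw1]
        rw [← Finset.sum_coe_sort t w]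
        exact Equiv.sum_comp σ (fun a => w (a : E))
      have hsum2 : ∑ j, w' j • x' j = p := by
        have he : ∑ j, w' j • x' j = ∑ j : Fin (d + 1),
            (if hj : (j : ℕ) < t.card then
              (fun k : Fin t.card => w (σ k) • (σ k : E)) ⟨j, hj⟩ else 0) :=
          Finset.sum_congr rfl fun j _ => by
            by_cases hj : (j : ℕ) < t.card <;> simp [hw', hx', hj]
        rw [he, sum_pad hcard (fun k : Fin t.card => w (σ k) • ((σ k : E)))]
        rw [Equiv.sum_comp σ (fun a : {x // x ∈ t} => w (a : E) • (a : E))]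
        rw [Finset.sum_coe_sort t (fun y => w y • y)]
        simpa using hwp
      refine ⟨(w', x'), ⟨⟨fun i => ?_, hsum1⟩, fun i _ => ?_⟩, hsum2⟩
      · by_cases hj : (i : ℕ) < t.card <;> simp [hw', hj]
        exact hw0 _ (σ ⟨i, hj⟩).2
      · by_cases hj : (i : ℕ) < t.card <;> simp [hx', hj]
        exacts [hts (σ ⟨i, hj⟩).2, hs₀]
  rwa [himeq] at himage



private lemma grad_mem_subdiff {n : ℕ} {x₀ : EuclideanSpace ℝ (Fin n)} {δ : ℝ}
    {f : EuclideanSpace ℝ (Fin n) → ℝ} (hf : ConvexOn ℝ (Metric.ball x₀ δ) f)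
    {x : EuclideanSpace ℝ (Fin n)} (hx : x ∈ Metric.ball x₀ δ)
    (hdx : DifferentiableAt ℝ f x) {y : EuclideanSpace ℝ (Fin n)}
    (hy : y ∈ Metric.ball x₀ δ) :
    f x + ⟪gradient f x, y - x⟫ ≤ f y := by
  set v := y - x with hv
  have hc : HasDerivAt (fun t : ℝ => x + t • v) v 0 := by
    simpa using ((hasDerivAt_id (0 : ℝ)).smul_const v).const_add x
  have hφ : HasDerivAt (fun t : ℝ => f (x + t • v)) (fderiv ℝ f x v) 0 :=
    (show HasFDerivAt f (fderiv ℝ f x) ((fun t : ℝ => x + t • v) 0) by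
      simpa using hdx.hasFDerivAt).comp_hasDerivAt 0 hc
  have hgv : ⟪gradient f x, v⟫ = fderiv ℝ f x v := InnerProductSpace.toDual_symm_apply
  have hslope : ∀ t ∈ Ioo (0 : ℝ) 1, slope (fun t : ℝ => f (x + t • v)) 0 t ≤ f y - f x := by
    intro t ht
    have hco := hf.2 hx hy (show (0:ℝ) ≤ 1 - t by linarith [ht.2]) ht.1.le (show (1 - t) + t = 1 by ring)
    have hxt : (1 - t) • x + t • y = x + t • v := by rw [hv]; module
    rw [hxt] at hco
    simp only [smul_eq_mul] at hco
    have h0 : x + (0 : ℝ) • v = x := by simp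
    rw [slope_def_field, h0, sub_zero, div_le_iff₀ ht.1]
    nlinarith [hco]
  have htend : Tendsto (slope (fun t : ℝ => f (x + t • v)) 0) (𝓝[>] (0:ℝ))
      (𝓝 (fderiv ℝ f x v)) :=
    (hasDerivAt_iff_tendsto_slope.1 hφ).mono_left
      (nhdsWithin_mono _ fun t ht => ne_of_gt ht)
  have hle : fderiv ℝ f x v ≤ f y - f x :=
    le_of_tendsto htend (Filter.eventually_of_mem
      (Ioo_mem_nhdsGT_of_mem ⟨le_refl (0:ℝ), zero_lt_one⟩) hslope)
  rw [hv] at hgv ⊢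
  rw [hgv]
  linarith


set_option maxHeartbeats 2000000 in
private lemma convexHull_reachable_eq_subdiff {n : ℕ} (x₀ : EuclideanSpace ℝ (Fin n)) {δ : ℝ}
    (hδ : 0 < δ) (f : EuclideanSpace ℝ (Fin n) → ℝ)
    (hf : ConvexOn ℝ (Metric.ball x₀ δ) f) :
    convexHull ℝ (reachableGradients (Metric.ball x₀ δ) f x₀) =
      subdiff (Metric.ball x₀ δ) f x₀ := by
  classical
  have hx₀δ : x₀ ∈ Metric.ball x₀ δ := Metric.mem_ball_self hδ
  obtain ⟨L, t, ht, hLip0⟩ := hf.locallyLipschitzOn Metric.isOpen_ball hx₀δ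
  rw [Metric.isOpen_ball.nhdsWithin_eq hx₀δ] at ht
  obtain ⟨r0, hr00, hr0t⟩ := Metric.mem_nhds_iff.1 ht
  set r := min r0 δ with hrdef
  have hr0 : 0 < r := lt_min hr00 hδ
  have hrt : Metric.ball x₀ r ⊆ t := fun z hz =>
    hr0t (Metric.ball_subset_ball (min_le_left _ _) hz)
  have hrδ : Metric.ball x₀ r ⊆ Metric.ball x₀ δ := Metric.ball_subset_ball (min_le_right _ _)
  have hLip : LipschitzOnWith L f (Metric.ball x₀ r) := hLip0.mono hrt
  obtain ⟨F, hF, hFf⟩ := hLip.extend_real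
  have hEq : ∀ x ∈ Metric.ball x₀ r, f =ᶠ[𝓝 x] F := fun x hx =>
    Filter.eventually_of_mem (Metric.isOpen_ball.mem_nhds hx) hFf
  have hdense : ∀ (y : EuclideanSpace ℝ (Fin n)) (ρ : ℝ), 0 < ρ →
      ∃ x ∈ Metric.ball y ρ, DifferentiableAt ℝ F x := by
    intro y ρ hρ
    have hae := hF.ae_differentiableAt (μ := MeasureTheory.volume)
    rw [MeasureTheory.ae_iff] at hae
    by_contra hcon
    push_neg at hcon
    have hsub : Metric.ball y ρ ⊆ {x | ¬ DifferentiableAt ℝ F x} := fun z hz => hcon z hz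
    exact absurd (MeasureTheory.measure_mono_null hsub hae)
      (Metric.measure_ball_pos MeasureTheory.volume y hρ).ne'
  have hgradeq : ∀ x ∈ Metric.ball x₀ r, DifferentiableAt ℝ F x →
      DifferentiableAt ℝ f x := fun x hx hd => (hEq x hx).differentiableAt_iff.2 hd
  have hgradbound : ∀ x ∈ Metric.ball x₀ r, DifferentiableAt ℝ f x →
      ‖gradient f x‖ ≤ (L : ℝ) := by
    intro x hx hd
    have h1 : ‖fderiv ℝ f x‖ ≤ (L : ℝ) :=
      norm_fderiv_le_of_lipschitzOn ℝ (Metric.isOpen_ball.mem_nhds hx) hLip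
    calc ‖gradient f x‖
        = ‖fderiv ℝ f x‖ := by
          rw [show gradient f x
            = (InnerProductSpace.toDual ℝ (EuclideanSpace ℝ (Fin n))).symm (fderiv ℝ f x)
            from rfl]
          exact LinearIsometryEquiv.norm_map _ _
      _ ≤ (L : ℝ) := h1
  set D := reachableGradients (Metric.ball x₀ δ) f x₀ with hDdef
  have hDsub : D ⊆ subdiff (Metric.ball x₀ δ) f x₀ := by
    rintro p ⟨xs, hmem, hdiff, htd, hgd⟩ y hy
    have hev : ∀ᶠ i in atTop, xs i ∈ Metric.ball x₀ r :=
      htd.eventually (Metric.isOpen_ball.eventually_mem (Metric.mem_ball_self hr0))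
    have hfx : Tendsto (fun i => f (xs i)) atTop (𝓝 (f x₀)) := by
      have hFt : Tendsto (fun i => F (xs i)) atTop (𝓝 (F x₀)) :=
        (hF.continuous.tendsto _).comp htd
      rw [hFf (Metric.mem_ball_self hr0)]
      exact hFt.congr' (hev.mono fun i hi => (hFf hi).symm)
    have hin : Tendsto (fun i => f (xs i) + ⟪gradient f (xs i), y - xs i⟫) atTop
        (𝓝 (f x₀ + ⟪p, y - x₀⟫)) :=
      hfx.add (hgd.inner (tendsto_const_nhds.sub htd))
    exact le_of_tendsto hin (Filter.Eventually.of_forall fun i =>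
      grad_mem_subdiff hf (hmem i) (hdiff i) hy)
  have hconv : Convex ℝ (subdiff (Metric.ball x₀ δ) f x₀) := by
    intro p hp q hq a b ha hb hab
    intro y hy
    have h1 := hp y hy
    have h2 := hq y hy
    have hie : ⟪a • p + b • q, y - x₀⟫ = a * ⟪p, y - x₀⟫ + b * ⟪q, y - x₀⟫ := by
      rw [inner_add_left, real_inner_smul_left, real_inner_smul_left]
    show f x₀ + ⟪a • p + b • q, y - x₀⟫ ≤ f y
    rw [hie]
    have h3 := mul_le_mul_of_nonneg_left h1 ha
    have h4 := mul_le_mul_of_nonneg_left h2 hb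
    have hsplit : a * f x₀ + b * f x₀ = f x₀ := by rw [← add_mul, hab, one_mul]
    have hfy : a * f y + b * f y = f y := by rw [← add_mul, hab, one_mul]
    nlinarith [h3, h4, hsplit, hfy]
  have hDbd : D ⊆ Metric.closedBall (0 : EuclideanSpace ℝ (Fin n)) L := by
    rintro p ⟨xs, hmem, hdiff, htd, hgd⟩
    rw [mem_closedBall_zero_iff]
    have hev : ∀ᶠ i in atTop, ‖gradient f (xs i)‖ ≤ (L : ℝ) :=
      (htd.eventually (Metric.isOpen_ball.eventually_mem (Metric.mem_ball_self hr0))).mono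
        fun i hi => hgradbound _ hi (hdiff i)
    exact le_of_tendsto hgd.norm hev
  have hDclosed : IsClosed D := by
    rw [← isSeqClosed_iff_isClosed]
    intro ps p hps hlim
    choose xs hmem hdiff htd hgd using hps
    have hpick : ∀ m : ℕ, ∃ z, z ∈ Metric.ball x₀ δ ∧ DifferentiableAt ℝ f z ∧
        dist z x₀ < 1 / (m + 1) ∧ dist (gradient f z) (ps m) < 1 / (m + 1) := by
      intro m
      have h1 : ∀ᶠ i in atTop, dist (xs m i) x₀ < 1 / (m + 1) :=
        (Metric.tendsto_nhds.1 (htd m)) _ (by positivity)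
      have h2 : ∀ᶠ i in atTop, dist (gradient f (xs m i)) (ps m) < 1 / (m + 1) :=
        (Metric.tendsto_nhds.1 (hgd m)) _ (by positivity)
      obtain ⟨i, hi1, hi2⟩ := (h1.and h2).exists
      exact ⟨xs m i, hmem m i, hdiff m i, hi1, hi2⟩
    choose z hz1 hz2 hz3 hz4 using hpick
    refine ⟨z, hz1, hz2, ?_, ?_⟩
    · rw [tendsto_iff_dist_tendsto_zero]
      exact squeeze_zero (fun m => dist_nonneg) (fun m => (hz3 m).le)
        tendsto_one_div_add_atTop_nhds_zero_nat
    · rw [tendsto_iff_dist_tendsto_zero]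
      refine squeeze_zero (fun m => dist_nonneg)
        (fun m => (dist_triangle _ (ps m) p).trans (add_le_add (hz4 m).le le_rfl)) ?_
      simpa using
        tendsto_one_div_add_atTop_nhds_zero_nat.add (tendsto_iff_dist_tendsto_zero.1 hlim)
  have hDcpt : IsCompact D :=
    Metric.isCompact_of_isClosed_isBounded hDclosed (Metric.isBounded_closedBall.subset hDbd)
  have hCcpt : IsCompact (convexHull ℝ D) := isCompact_convexHull' hDcpt
  apply Set.Subset.antisymm
  · exact convexHull_min hDsub hconv
  · intro p hp
    by_contra hpc
    obtain ⟨l, u, hlu, hup⟩ := geometric_hahn_banach_closed_point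
      (convex_convexHull ℝ D) hCcpt.isClosed hpc
    set v : EuclideanSpace ℝ (Fin n) :=
      (InnerProductSpace.toDual ℝ (EuclideanSpace ℝ (Fin n))).symm l with hvdef
    have hlv : ∀ a, l a = ⟪v, a⟫ := fun a => (InnerProductSpace.toDual_symm_apply).symm
    have hv1 : (0:ℝ) ≤ ‖v‖ := norm_nonneg v
    set c : ℝ := r / (3 * (‖v‖ + 1)) with hcdef
    have hc : 0 < c := by positivity
    have hcv : c * (‖v‖ + 1) = r / 3 := by
      rw [hcdef]; field_simp
    set T : ℕ → ℝ := fun m => c / (m + 1) with hTdef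
    have hT : ∀ m, 0 < T m := fun m => by positivity
    have hTc : ∀ m, T m ≤ c := fun m => by
      simp only [hTdef]
      refine div_le_self hc.le ?_
      have := Nat.cast_nonneg (α := ℝ) m
      linarith
    set ρ : ℕ → ℝ := fun m => T m / (m + 1) with hρdef
    have hρ : ∀ m, 0 < ρ m := fun m => by positivity
    have hρT : ∀ m, ρ m ≤ T m := fun m => by
      simp only [hρdef]
      refine div_le_self (hT m).le ?_
      have := Nat.cast_nonneg (α := ℝ) m
      linarith
    have hTnorm : ∀ m, dist (x₀ + T m • v) x₀ = T m * ‖v‖ := fun m => by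
      rw [dist_eq_norm]
      rw [add_sub_cancel_left]
      rw [norm_smul, Real.norm_eq_abs, abs_of_pos (hT m)]
    have hx₀T : ∀ m, x₀ + T m • v ∈ Metric.ball x₀ r := by
      intro m
      rw [Metric.mem_ball, hTnorm m]
      have h1 : T m * ‖v‖ ≤ c * ‖v‖ := mul_le_mul_of_nonneg_right (hTc m) hv1
      nlinarith [hc, hr0, hcv]
    have hmain : ∀ m : ℕ, ∃ ym, ym ∈ Metric.ball x₀ r ∧ DifferentiableAt ℝ f ym ∧
        dist ym x₀ ≤ (c * (‖v‖ + 1)) / (m + 1) ∧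
        ⟪p, v⟫ - 2 * (L : ℝ) / (m + 1) ≤ ⟪gradient f ym, v⟫ := by
      intro m
      obtain ⟨ym, hym1, hym2⟩ := hdense (x₀ + T m • v) (ρ m) (hρ m)
      rw [Metric.mem_ball] at hym1
      have hdist2 : dist (ym - T m • v) x₀ = dist ym (x₀ + T m • v) := by
        rw [dist_eq_norm, dist_eq_norm, sub_sub, add_comm (T m • v) x₀]
      have hzr : ym ∈ Metric.ball x₀ r := by
        rw [Metric.mem_ball]
        have htri := dist_triangle ym (x₀ + T m • v) x₀
        rw [hTnorm m] at htri
        have h1 : T m * ‖v‖ ≤ c * ‖v‖ := mul_le_mul_of_nonneg_right (hTc m) hv1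
        nlinarith [hρT m, hTc m, hcv, hr0, hym1]
      have hz2 : ym - T m • v ∈ Metric.ball x₀ r := by
        rw [Metric.mem_ball, hdist2]
        nlinarith [hρT m, hTc m, hcv, hr0, hv1, hc, hym1]
      have hdf : DifferentiableAt ℝ f ym := hgradeq _ hzr hym2
      refine ⟨ym, hzr, hdf, ?_, ?_⟩
      · have htri := dist_triangle ym (x₀ + T m • v) x₀
        rw [hTnorm m] at htri
        have heq : T m * (‖v‖ + 1) = c * (‖v‖ + 1) / (m + 1) := by
          simp only [hTdef]; ring
        nlinarith [hρT m, hym1]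
      · have hsub2 := grad_mem_subdiff hf (hrδ hzr) hdf (hrδ hz2)
        have he : ⟪gradient f ym, (ym - T m • v) - ym⟫ = -(T m * ⟪gradient f ym, v⟫) := by
          rw [sub_sub_cancel_left, inner_neg_right, real_inner_smul_right]
        rw [he] at hsub2
        have hsub1 := hp (x₀ + T m • v) (hrδ (hx₀T m))
        rw [add_sub_cancel_left, real_inner_smul_right] at hsub1
        have hLa : |f ym - f (x₀ + T m • v)| ≤ (L : ℝ) * ρ m := by
          calc |f ym - f (x₀ + T m • v)|
              = dist (F ym) (F (x₀ + T m • v)) := by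
                rw [Real.dist_eq, ← hFf hzr, ← hFf (hx₀T m)]
            _ ≤ (L : ℝ) * dist ym (x₀ + T m • v) := hF.dist_le_mul _ _
            _ ≤ (L : ℝ) * ρ m := by
                exact mul_le_mul_of_nonneg_left hym1.le (by positivity)
        have hLb : |f (ym - T m • v) - f x₀| ≤ (L : ℝ) * ρ m := by
          calc |f (ym - T m • v) - f x₀|
              = dist (F (ym - T m • v)) (F x₀) := by
                rw [Real.dist_eq, ← hFf hz2, ← hFf (Metric.mem_ball_self hr0)]
            _ ≤ (L : ℝ) * dist (ym - T m • v) x₀ := hF.dist_le_mul _ _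
            _ ≤ (L : ℝ) * ρ m := by
                rw [hdist2]
                exact mul_le_mul_of_nonneg_left hym1.le (by positivity)
        have ha' := abs_le.1 hLa
        have hb' := abs_le.1 hLb
        have h5 : T m * ⟪p, v⟫ - 2 * (L : ℝ) * ρ m ≤ T m * ⟪gradient f ym, v⟫ := by
          linarith [ha'.1, ha'.2, hb'.1, hb'.2, hsub1, hsub2]
        have h6 : T m * (⟪p, v⟫ - 2 * (L : ℝ) / (m + 1)) ≤ T m * ⟪gradient f ym, v⟫ := by
          have hTY : T m * (2 * (L : ℝ) / (m + 1)) = 2 * (L : ℝ) * ρ m := by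
            simp only [hρdef]; ring
          rw [mul_sub, hTY]
          exact h5
        exact le_of_mul_le_mul_left h6 (hT m)
    choose ym hym_r hym_diff hym_dist hym_ineq using hmain
    have hym_tend : Tendsto ym atTop (𝓝 x₀) := by
      rw [tendsto_iff_dist_tendsto_zero]
      refine squeeze_zero (fun m => dist_nonneg) hym_dist ?_
      have h2 := (tendsto_const_div_atTop_nhds_zero_nat (c * (‖v‖ + 1))).comp
        (Filter.tendsto_add_atTop_nat 1)
      exact Filter.Tendsto.congr
        (fun m => by simp only [Function.comp_apply]; push_cast; ring) h2
    obtain ⟨q, hqmem, φ, hφ, hqt⟩ :=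
      (isCompact_closedBall (0 : EuclideanSpace ℝ (Fin n)) L).tendsto_subseq
        (x := fun m => gradient f (ym m))
        (fun m => mem_closedBall_zero_iff.2 (hgradbound _ (hym_r m) (hym_diff m)))
    have hqD : q ∈ D := by
      refine ⟨ym ∘ φ, fun i => hrδ (hym_r (φ i)), fun i => hym_diff (φ i),
        hym_tend.comp hφ.tendsto_atTop, hqt⟩
    have h1 : ⟪p, v⟫ ≤ ⟪q, v⟫ := by
      have ht1 : Tendsto (fun i => ⟪p, v⟫ - 2 * (L : ℝ) / (φ i + 1)) atTop
          (𝓝 (⟪p, v⟫ - 0)) := by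
        refine tendsto_const_nhds.sub ?_
        have h2 := (tendsto_const_div_atTop_nhds_zero_nat (2 * (L : ℝ))).comp
          ((Filter.tendsto_add_atTop_nat 1).comp hφ.tendsto_atTop)
        exact Filter.Tendsto.congr
          (fun i => by simp only [Function.comp_apply]; push_cast; ring) h2
      have ht2 : Tendsto (fun i => ⟪gradient f (ym (φ i)), v⟫) atTop (𝓝 ⟪q, v⟫) :=
        ((continuous_id.inner continuous_const).tendsto q).comp hqt
      have hle := le_of_tendsto_of_tendsto ht1 ht2
        (Filter.Eventually.of_forall fun i => hym_ineq (φ i))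
      simpa using hle
    have h2 : l q < u := hlu q (subset_convexHull ℝ D hqD)
    rw [hlv q] at h2
    rw [hlv p] at hup
    have h3 : ⟪v, p⟫ = ⟪p, v⟫ := real_inner_comm _ _
    have h4 : ⟪v, q⟫ = ⟪q, v⟫ := real_inner_comm _ _
    linarith


/-- If `u = g + K‖·‖²` on a ball `B(x₀, δ) ⊆ Ω` with `g` concave, then, with `f := -g`,
`D*u(x₀) = -D*f(x₀) + 2Kx₀` and `D⁺u(x₀) = conv D*u(x₀) = -∂f(x₀) + 2Kx₀`. -/
theorem reachableGradients_superdifferential_of_semiconcave_rep {n : ℕ}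
    (Ω : Set (EuclideanSpace ℝ (Fin n))) (hΩ : IsOpen Ω)
    (x₀ : EuclideanSpace ℝ (Fin n)) (hx₀ : x₀ ∈ Ω) (δ : ℝ) (hδ : 0 < δ)
    (hball : Metric.ball x₀ δ ⊆ Ω)
    (u g : EuclideanSpace ℝ (Fin n) → ℝ) (K : ℝ)
    (hg : ConcaveOn ℝ (Metric.ball x₀ δ) g)
    (hu : ∀ x ∈ Metric.ball x₀ δ, u x = g x + K * ‖x‖ ^ 2) :
    reachableGradients Ω u x₀ =
      (fun a => -a + (2 * K) • x₀) ''
        reachableGradients (Metric.ball x₀ δ) (fun x => -g x) x₀ ∧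
    convexHull ℝ (reachableGradients Ω u x₀) =
      (fun a => -a + (2 * K) • x₀) '' subdiff (Metric.ball x₀ δ) (fun x => -g x) x₀ := by
  classical
  set f : EuclideanSpace ℝ (Fin n) → ℝ := fun x => -g x with hfdef
  have hq : ∀ x : EuclideanSpace ℝ (Fin n), HasFDerivAt (fun y => K * ‖y‖ ^ 2)
      (K • ((fderivInnerCLM ℝ (x, x)).comp
        ((ContinuousLinearMap.id ℝ (EuclideanSpace ℝ (Fin n))).prod
          (ContinuousLinearMap.id ℝ (EuclideanSpace ℝ (Fin n)))))) x := by
    intro x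
    have h1 := (HasFDerivAt.inner ℝ (hasFDerivAt_id x) (hasFDerivAt_id x)).const_mul K
    simpa only [real_inner_self_eq_norm_sq, id_eq] using h1
  have hgrad : ∀ x ∈ Metric.ball x₀ δ,
      (DifferentiableAt ℝ u x ↔ DifferentiableAt ℝ f x) ∧
      (DifferentiableAt ℝ f x → gradient u x = (2 * K) • x - gradient f x) := by
    intro x hx
    have hball_ev : ∀ᶠ y in 𝓝 x, y ∈ Metric.ball x₀ δ := Metric.isOpen_ball.eventually_mem hx
    have huev : u =ᶠ[𝓝 x] fun y => K * ‖y‖ ^ 2 - f y :=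
      hball_ev.mono fun y hy => by rw [hu y hy]; simp [hfdef]; ring
    have hfev : f =ᶠ[𝓝 x] fun y => K * ‖y‖ ^ 2 - u y :=
      hball_ev.mono fun y hy => by simp only [hfdef]; rw [hu y hy]; ring
    constructor
    · constructor
      · intro hdu
        exact hfev.symm.differentiableAt_iff.1 (((hq x).differentiableAt).sub hdu)
      · intro hdf
        exact huev.symm.differentiableAt_iff.1 (((hq x).differentiableAt).sub hdf)
    · intro hdf
      have hFd : HasFDerivAt (fun y => K * ‖y‖ ^ 2 - f y)
          (K • ((fderivInnerCLM ℝ (x, x)).comp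
            ((ContinuousLinearMap.id ℝ (EuclideanSpace ℝ (Fin n))).prod
              (ContinuousLinearMap.id ℝ (EuclideanSpace ℝ (Fin n)))))
            - fderiv ℝ f x) x := (hq x).sub hdf.hasFDerivAt
      have hgu : HasGradientAt u
          ((InnerProductSpace.toDual ℝ (EuclideanSpace ℝ (Fin n))).symm
            (K • ((fderivInnerCLM ℝ (x, x)).comp
              ((ContinuousLinearMap.id ℝ (EuclideanSpace ℝ (Fin n))).prod
                (ContinuousLinearMap.id ℝ (EuclideanSpace ℝ (Fin n)))))
              - fderiv ℝ f x)) x :=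
        (hasFDerivAt_iff_hasGradientAt.1 hFd).congr_of_eventuallyEq huev
      have hD : (K • ((fderivInnerCLM ℝ (x, x)).comp
          ((ContinuousLinearMap.id ℝ (EuclideanSpace ℝ (Fin n))).prod
            (ContinuousLinearMap.id ℝ (EuclideanSpace ℝ (Fin n))))))
          = (InnerProductSpace.toDual ℝ (EuclideanSpace ℝ (Fin n))) ((2 * K) • x) := by
        refine ContinuousLinearMap.ext fun w => ?_
        simp only [ContinuousLinearMap.smul_apply, ContinuousLinearMap.coe_comp',
          Function.comp_apply, ContinuousLinearMap.prod_apply,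
          ContinuousLinearMap.coe_id', id_eq, fderivInnerCLM_apply,
          InnerProductSpace.toDual_apply_apply, real_inner_smul_left, smul_eq_mul,
          real_inner_comm w x]
        ring
      rw [hgu.gradient, hD, map_sub, LinearIsometryEquiv.symm_apply_apply]
      rfl
  have hset : reachableGradients Ω u x₀ =
      (fun a => -a + (2 * K) • x₀) '' reachableGradients (Metric.ball x₀ δ) f x₀ := by
    ext p
    constructor
    · rintro ⟨xs, hmem, hdiff, htd, hgd⟩
      obtain ⟨N, hN⟩ := Filter.eventually_atTop.1
        (htd.eventually (Metric.isOpen_ball.eventually_mem (Metric.mem_ball_self hδ)))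
      set ys : ℕ → EuclideanSpace ℝ (Fin n) := fun i => xs (i + N) with hysdef
      have hys_mem : ∀ i, ys i ∈ Metric.ball x₀ δ := fun i => hN (i + N) (Nat.le_add_left N i)
      have hys_td : Tendsto ys atTop (𝓝 x₀) := htd.comp (Filter.tendsto_add_atTop_nat N)
      have hys_gd : Tendsto (fun i => gradient u (ys i)) atTop (𝓝 p) :=
        hgd.comp (Filter.tendsto_add_atTop_nat N)
      have hys_df : ∀ i, DifferentiableAt ℝ f (ys i) := fun i =>
        ((hgrad _ (hys_mem i)).1).1 (hdiff (i + N))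
      refine ⟨(2 * K) • x₀ - p, ⟨ys, hys_mem, hys_df, hys_td, ?_⟩,
        show -((2 * K) • x₀ - p) + (2 * K) • x₀ = p by abel⟩
      have hgr : ∀ i, gradient f (ys i) = (2 * K) • ys i - gradient u (ys i) := by
        intro i
        rw [(hgrad _ (hys_mem i)).2 (hys_df i)]
        abel
      have ht : Tendsto (fun i => (2 * K) • ys i - gradient u (ys i)) atTop
          (𝓝 ((2 * K) • x₀ - p)) := (hys_td.const_smul (2 * K)).sub hys_gd
      exact ht.congr fun i => (hgr i).symm
    · rintro ⟨q, ⟨xs, hmem, hdiff, htd, hgd⟩, rfl⟩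
      have hdu : ∀ i, DifferentiableAt ℝ u (xs i) := fun i =>
        ((hgrad _ (hmem i)).1).2 (hdiff i)
      refine ⟨xs, fun i => hball (hmem i), hdu, htd, ?_⟩
      have hgr : ∀ i, gradient u (xs i) = (2 * K) • xs i - gradient f (xs i) := fun i =>
        (hgrad _ (hmem i)).2 (hdiff i)
      have h1 : Tendsto (fun i => (2 * K) • xs i - gradient f (xs i)) atTop
          (𝓝 ((2 * K) • x₀ - q)) := (htd.const_smul (2 * K)).sub hgd
      have h2 : (2 * K) • x₀ - q = -q + (2 * K) • x₀ := by abel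
      show Tendsto (fun i => gradient u (xs i)) atTop (𝓝 (-q + (2 * K) • x₀))
      rw [← h2]
      exact h1.congr fun i => (hgr i).symm
  refine ⟨hset, ?_⟩
  have hkey := convexHull_reachable_eq_subdiff x₀ hδ f hg.neg
  have hAmk : ∀ p' : EuclideanSpace ℝ (Fin n),
      (fun a : EuclideanSpace ℝ (Fin n) => -a + (2 * K) • x₀) p'
        = (-(LinearMap.id (R := ℝ) (M := EuclideanSpace ℝ (Fin n))))
            (p' -ᵥ (0 : EuclideanSpace ℝ (Fin n)))
          +ᵥ (fun a : EuclideanSpace ℝ (Fin n) => -a + (2 * K) • x₀)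
              (0 : EuclideanSpace ℝ (Fin n)) := by
    intro p'
    simp [vsub_eq_sub, vadd_eq_add]
  have himg := AffineMap.image_convexHull
    (AffineMap.mk' (fun a : EuclideanSpace ℝ (Fin n) => -a + (2 * K) • x₀)
      (-(LinearMap.id (R := ℝ) (M := EuclideanSpace ℝ (Fin n))))
      (0 : EuclideanSpace ℝ (Fin n)) hAmk)
    (reachableGradients (Metric.ball x₀ δ) f x₀)
  rw [AffineMap.coe_mk'] at himg
  rw [hset, ← himg, hkey]
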